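/- For every μ ∈ (0,1) and every σ² > 0, the Fisher information for the dispersion parameter of the simplex distribution equals 1/(2(σ²)²): ∫₀¹ ( d(y;μ)/(2(σ²)²) − 1/(2σ²) )² · p(y;μ,σ²) dy = 1/(2(σ²)²). (Equivalently, ∫₀¹ d(y;μ)² · p(y;μ,σ²) dy = 3(σ²)².) -/

import Mathlib

set_option linter.unusedSectionVars false

open Real MeasureTheory Filter Set

/-- The unit deviance of the simplex distribution. -/
noncomputable def simplexDev (y μ : ℝ) : ℝ :=
  (y - μ)^2 / (y * (1 - y) * μ^2 * (1 - μ)^2)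

/-- The simplex density. -/
noncomputable def simplexPdf (y μ σ2 : ℝ) : ℝ :=
  (2 * Real.pi * σ2 * (y * (1 - y))^3) ^ (-(1/2) : ℝ) *
    Real.exp (-(simplexDev y μ) / (2 * σ2))

noncomputable def sPsi (σ2 t : ℝ) : ℝ :=
  (t ^ 2 / (2 * σ2 ^ 2) - 1 / (2 * σ2)) ^ 2 *
    ((2 * Real.pi * σ2) ^ (-(1/2) : ℝ) * Real.exp (-t ^ 2 / (2 * σ2)))


lemma integrable_sq_exp {b : ℝ} (hb : 0 < b) :
    Integrable fun x : ℝ => x ^ 2 * Real.exp (-b * x ^ 2) := by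
  have h2 : 0 < b / 2 := by linarith
  apply Integrable.mono' ((integrable_exp_neg_mul_sq h2).const_mul (2 / b))
  · exact (continuous_pow 2).mul ((continuous_const.mul (continuous_pow 2)).rexp)
      |>.aestronglyMeasurable
  · filter_upwards with x
    have h1 : x ^ 2 * Real.exp (-b * x ^ 2) ≤ 2 / b * Real.exp (-(b / 2) * x ^ 2) := by
      have he : b / 2 * x ^ 2 ≤ Real.exp (b / 2 * x ^ 2) := (Real.add_one_le_exp _).trans'
        (by linarith)
      have : x ^ 2 ≤ 2 / b * Real.exp (b / 2 * x ^ 2) := by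
        rw [div_mul_eq_mul_div, le_div_iff₀ hb]
        nlinarith
      calc x ^ 2 * Real.exp (-b * x ^ 2)
          ≤ (2 / b * Real.exp (b / 2 * x ^ 2)) * Real.exp (-b * x ^ 2) := by
            apply mul_le_mul_of_nonneg_right this (Real.exp_pos _).le
        _ = 2 / b * Real.exp (-(b / 2) * x ^ 2) := by
            rw [mul_assoc, ← Real.exp_add]; ring_nf
    have h0 : 0 ≤ x ^ 2 * Real.exp (-b * x ^ 2) := by positivity
    rw [Real.norm_eq_abs, abs_of_nonneg h0]; exact h1

lemma integrable_pow4_exp {b : ℝ} (hb : 0 < b) :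
    Integrable fun x : ℝ => x ^ 4 * Real.exp (-b * x ^ 2) := by
  have h2 : 0 < b / 2 := by linarith
  apply Integrable.mono' ((integrable_exp_neg_mul_sq h2).const_mul (16 / b ^ 2))
  · exact (continuous_pow 4).mul ((continuous_const.mul (continuous_pow 2)).rexp)
      |>.aestronglyMeasurable
  · filter_upwards with x
    have he : b / 4 * x ^ 2 ≤ Real.exp (b / 4 * x ^ 2) := (Real.add_one_le_exp _).trans'
      (by linarith)
    have h4 : x ^ 4 ≤ 16 / b ^ 2 * Real.exp (b / 2 * x ^ 2) := by
      have : Real.exp (b / 4 * x ^ 2) * Real.exp (b / 4 * x ^ 2) = Real.exp (b / 2 * x ^ 2) := by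
        rw [← Real.exp_add]; ring_nf
      have hx2 : x ^ 2 * x ^ 2 ≤ (Real.exp (b/4*x^2) * (4/b)) * (Real.exp (b/4*x^2) * (4/b)) := by
        apply mul_self_le_mul_self (by positivity)
        rw [mul_comm (Real.exp _), div_mul_eq_mul_div, le_div_iff₀ hb]
        nlinarith
      calc x ^ 4 = x ^ 2 * x ^ 2 := by ring
        _ ≤ (Real.exp (b/4*x^2) * (4/b)) * (Real.exp (b/4*x^2) * (4/b)) := hx2
        _ = 16 / b ^ 2 * (Real.exp (b/4*x^2) * Real.exp (b/4*x^2)) := by ring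
        _ = 16 / b ^ 2 * Real.exp (b / 2 * x ^ 2) := by rw [this]
    have h1 : x ^ 4 * Real.exp (-b * x ^ 2) ≤ 16 / b ^ 2 * Real.exp (-(b / 2) * x ^ 2) := by
      calc x ^ 4 * Real.exp (-b * x ^ 2)
          ≤ (16 / b ^ 2 * Real.exp (b / 2 * x ^ 2)) * Real.exp (-b * x ^ 2) :=
            mul_le_mul_of_nonneg_right h4 (Real.exp_pos _).le
        _ = 16 / b ^ 2 * Real.exp (-(b / 2) * x ^ 2) := by
            rw [mul_assoc, ← Real.exp_add]; ring_nf
    have h0 : 0 ≤ x ^ 4 * Real.exp (-b * x ^ 2) := by positivity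
    rw [Real.norm_eq_abs, abs_of_nonneg h0]; exact h1

lemma tendsto_pow_exp_zero_atTop {b : ℝ} (hb : 0 < b) (n : ℕ) :
    Tendsto (fun x : ℝ => x ^ n * Real.exp (-b * x ^ 2)) atTop (nhds 0) := by
  have h := rpow_mul_exp_neg_mul_sq_isLittleO_exp_neg hb (n : ℝ)
  have h2 : (fun x : ℝ => x ^ n * Real.exp (-b * x ^ 2)) =o[atTop]
      fun x : ℝ => Real.exp (-(1/2) * x) := by
    refine h.congr' ?_ (Eventually.of_forall fun _ => rfl)
    filter_upwards with x
    rw [Real.rpow_natCast]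
  apply h2.trans_tendsto
  have : Tendsto (fun x : ℝ => -(1/2) * x) atTop atBot := by
    apply Tendsto.const_mul_atTop_of_neg (by norm_num : (-(1/2):ℝ) < 0) tendsto_id
  exact Real.tendsto_exp_atBot.comp this

lemma tendsto_pow_exp_zero_atBot {b : ℝ} (hb : 0 < b) (n : ℕ) :
    Tendsto (fun x : ℝ => x ^ n * Real.exp (-b * x ^ 2)) atBot (nhds 0) := by
  have h := (tendsto_pow_exp_zero_atTop hb n).comp tendsto_neg_atBot_atTop
  have heq : (fun x : ℝ => (-x) ^ n * Real.exp (-b * (-x) ^ 2)) =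
      fun x : ℝ => (-1) ^ n * (x ^ n * Real.exp (-b * x ^ 2)) := by
    funext x; rw [neg_sq]; ring
  have h2 : Tendsto (fun x : ℝ => (-1:ℝ) ^ n * (x ^ n * Real.exp (-b * x ^ 2))) atBot (nhds 0) := by
    rw [← heq]; exact h
  have h3 := h2.const_mul ((-1:ℝ) ^ n)
  rw [mul_zero] at h3
  refine h3.congr fun x => ?_
  rw [← mul_assoc, ← mul_assoc, ← pow_add, Even.neg_one_pow ⟨n, rfl⟩, one_mul]

lemma integral_deriv_zero_real (f f' : ℝ → ℝ) (hd : ∀ x, HasDerivAt f (f' x) x)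
    (hi : Integrable f') (htop : Tendsto f atTop (nhds 0))
    (hbot : Tendsto f atBot (nhds 0)) : ∫ x : ℝ, f' x = 0 := by
  have h1 : ∫ x in Iic (0:ℝ), f' x = f 0 - 0 :=
    integral_Iic_of_hasDerivAt_of_tendsto' (fun x _ => hd x) hi.integrableOn hbot
  have h2 : ∫ x in Ioi (0:ℝ), f' x = 0 - f 0 :=
    integral_Ioi_of_hasDerivAt_of_tendsto' (fun x _ => hd x) hi.integrableOn htop
  rw [← intervalIntegral.integral_Iic_add_Ioi hi.integrableOn hi.integrableOn, h1, h2]; ring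

lemma integral_sq_exp {b : ℝ} (hb : 0 < b) :
    ∫ x : ℝ, x ^ 2 * Real.exp (-b * x ^ 2) = Real.sqrt (π / b) / (2 * b) := by
  have hd : ∀ x : ℝ, HasDerivAt (fun x : ℝ => x * Real.exp (-b * x ^ 2))
      (Real.exp (-b * x ^ 2) - 2 * b * (x ^ 2 * Real.exp (-b * x ^ 2))) x := by
    intro x
    have h1 : HasDerivAt (fun x : ℝ => -b * x ^ 2) (-b * (2 * x)) x := by
      simpa using (hasDerivAt_pow 2 x).const_mul (-b)
    have h2 := (h1.exp).const_mul 1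
    have := (hasDerivAt_id x).fun_mul h1.exp
    refine this.congr_deriv (Eq.symm ?_)
    simp only [id]
    ring
  have hi : Integrable (fun x : ℝ =>
      Real.exp (-b * x ^ 2) - 2 * b * (x ^ 2 * Real.exp (-b * x ^ 2))) :=
    (integrable_exp_neg_mul_sq hb).sub ((integrable_sq_exp hb).const_mul (2*b))
  have hz := integral_deriv_zero_real _ _ hd hi
    (tendsto_pow_exp_zero_atTop hb 1 |>.congr (by intro x; rw [pow_one]))
    (tendsto_pow_exp_zero_atBot hb 1 |>.congr (by intro x; rw [pow_one]))
  rw [integral_sub (integrable_exp_neg_mul_sq hb)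
    ((integrable_sq_exp hb).const_mul (2*b)), MeasureTheory.integral_const_mul,
    integral_gaussian] at hz
  have hbne : (2:ℝ) * b ≠ 0 := by positivity
  field_simp at hz ⊢
  linarith

lemma integral_pow4_exp {b : ℝ} (hb : 0 < b) :
    ∫ x : ℝ, x ^ 4 * Real.exp (-b * x ^ 2) = 3 * Real.sqrt (π / b) / (4 * b ^ 2) := by
  have hd : ∀ x : ℝ, HasDerivAt (fun x : ℝ => x ^ 3 * Real.exp (-b * x ^ 2))
      (3 * (x ^ 2 * Real.exp (-b * x ^ 2)) - 2 * b * (x ^ 4 * Real.exp (-b * x ^ 2))) x := by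
    intro x
    have h1 : HasDerivAt (fun x : ℝ => -b * x ^ 2) (-b * (2 * x)) x := by
      simpa using (hasDerivAt_pow 2 x).const_mul (-b)
    have := (hasDerivAt_pow 3 x).fun_mul h1.exp
    refine this.congr_deriv (Eq.symm ?_)
    push_cast
    ring
  have hi : Integrable (fun x : ℝ =>
      3 * (x ^ 2 * Real.exp (-b * x ^ 2)) - 2 * b * (x ^ 4 * Real.exp (-b * x ^ 2))) :=
    ((integrable_sq_exp hb).const_mul 3).sub ((integrable_pow4_exp hb).const_mul (2*b))
  have hz := integral_deriv_zero_real _ _ hd hi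
    (tendsto_pow_exp_zero_atTop hb 3) (tendsto_pow_exp_zero_atBot hb 3)
  rw [integral_sub ((integrable_sq_exp hb).const_mul 3) ((integrable_pow4_exp hb).const_mul (2*b)),
    MeasureTheory.integral_const_mul, MeasureTheory.integral_const_mul,
    integral_sq_exp hb] at hz
  have hbne : b ≠ 0 := ne_of_gt hb
  field_simp at hz ⊢
  linarith


lemma sPsi_eq (σ2 : ℝ) (t : ℝ) :
    sPsi σ2 t = (2 * π * σ2) ^ (-(1/2) : ℝ) *
      ((1 / (2 * σ2 ^ 2)) ^ 2 * (t ^ 4 * Real.exp (-(1/(2*σ2)) * t ^ 2))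
        - 2 * (1 / (2 * σ2 ^ 2)) * (1 / (2 * σ2)) * (t ^ 2 * Real.exp (-(1/(2*σ2)) * t ^ 2))
        + (1 / (2 * σ2)) ^ 2 * Real.exp (-(1/(2*σ2)) * t ^ 2)) := by
  unfold sPsi
  have : -t ^ 2 / (2 * σ2) = -(1/(2*σ2)) * t ^ 2 := by ring
  rw [this]
  ring

lemma integrable_sPsi {σ2 : ℝ} (hσ2 : 0 < σ2) : Integrable (sPsi σ2) := by
  have hb : 0 < 1 / (2 * σ2) := by positivity
  have h : Integrable (fun t : ℝ =>
      (1 / (2 * σ2 ^ 2)) ^ 2 * (t ^ 4 * Real.exp (-(1/(2*σ2)) * t ^ 2))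
        - 2 * (1 / (2 * σ2 ^ 2)) * (1 / (2 * σ2)) * (t ^ 2 * Real.exp (-(1/(2*σ2)) * t ^ 2))
        + (1 / (2 * σ2)) ^ 2 * Real.exp (-(1/(2*σ2)) * t ^ 2)) :=
    (((integrable_pow4_exp hb).const_mul _).sub ((integrable_sq_exp hb).const_mul _)).add
      ((integrable_exp_neg_mul_sq hb).const_mul _)
  have := h.const_mul ((2 * π * σ2) ^ (-(1/2) : ℝ))
  exact this.congr (Eventually.of_forall fun t => (sPsi_eq σ2 t).symm)

lemma integral_sPsi {σ2 : ℝ} (hσ2 : 0 < σ2) : ∫ t : ℝ, sPsi σ2 t = 1 / (2 * σ2 ^ 2) := by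
  have hb : 0 < 1 / (2 * σ2) := by positivity
  have hsplit : ∫ t : ℝ, sPsi σ2 t = (2 * π * σ2) ^ (-(1/2) : ℝ) *
      ((1 / (2 * σ2 ^ 2)) ^ 2 * (∫ t : ℝ, t ^ 4 * Real.exp (-(1/(2*σ2)) * t ^ 2))
        - 2 * (1 / (2 * σ2 ^ 2)) * (1 / (2 * σ2)) *
            (∫ t : ℝ, t ^ 2 * Real.exp (-(1/(2*σ2)) * t ^ 2))
        + (1 / (2 * σ2)) ^ 2 * (∫ t : ℝ, Real.exp (-(1/(2*σ2)) * t ^ 2))) := by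
    rw [show (∫ t : ℝ, sPsi σ2 t) = ∫ t : ℝ, (2 * π * σ2) ^ (-(1/2) : ℝ) *
      ((1 / (2 * σ2 ^ 2)) ^ 2 * (t ^ 4 * Real.exp (-(1/(2*σ2)) * t ^ 2))
        - 2 * (1 / (2 * σ2 ^ 2)) * (1 / (2 * σ2)) * (t ^ 2 * Real.exp (-(1/(2*σ2)) * t ^ 2))
        + (1 / (2 * σ2)) ^ 2 * Real.exp (-(1/(2*σ2)) * t ^ 2)) from
      integral_congr_ae (Eventually.of_forall fun t => sPsi_eq σ2 t)]
    rw [MeasureTheory.integral_const_mul]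
    congr 1
    have h4 : Integrable (fun t : ℝ =>
        (1 / (2 * σ2 ^ 2)) ^ 2 * (t ^ 4 * Real.exp (-(1/(2*σ2)) * t ^ 2))) :=
      (integrable_pow4_exp hb).const_mul _
    have h2i : Integrable (fun t : ℝ =>
        2 * (1 / (2 * σ2 ^ 2)) * (1 / (2 * σ2)) * (t ^ 2 * Real.exp (-(1/(2*σ2)) * t ^ 2))) :=
      (integrable_sq_exp hb).const_mul _
    have h0 : Integrable (fun t : ℝ =>
        (1 / (2 * σ2)) ^ 2 * Real.exp (-(1/(2*σ2)) * t ^ 2)) :=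
      (integrable_exp_neg_mul_sq hb).const_mul _
    have hA : Integrable (fun t : ℝ =>
        (1 / (2 * σ2 ^ 2)) ^ 2 * (t ^ 4 * Real.exp (-(1/(2*σ2)) * t ^ 2))
          - 2 * (1 / (2 * σ2 ^ 2)) * (1 / (2 * σ2)) * (t ^ 2 * Real.exp (-(1/(2*σ2)) * t ^ 2))) :=
      h4.sub h2i
    rw [integral_add hA h0, integral_sub h4 h2i,
      MeasureTheory.integral_const_mul, MeasureTheory.integral_const_mul,
      MeasureTheory.integral_const_mul]
  rw [hsplit, integral_pow4_exp hb, integral_sq_exp hb, integral_gaussian]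
  have hπ : 0 < π := Real.pi_pos
  have h2πσ : (0:ℝ) < 2 * π * σ2 := by positivity
  have hsq : Real.sqrt (π / (1 / (2 * σ2))) = Real.sqrt (2 * π * σ2) := by
    congr 1; field_simp
  rw [hsq]
  have hrpow : (2 * π * σ2) ^ (-(1/2) : ℝ) = (Real.sqrt (2 * π * σ2))⁻¹ := by
    rw [Real.rpow_neg h2πσ.le, Real.sqrt_eq_rpow]
  rw [hrpow]
  have hs : 0 < Real.sqrt (2 * π * σ2) := Real.sqrt_pos.mpr h2πσ
  field_simp
  ring


noncomputable def sg (μ y : ℝ) : ℝ := (y - μ) / (μ*(1-μ) * Real.sqrt (y*(1-y)))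
noncomputable def sgd (μ y : ℝ) : ℝ :=
  ((1-2*μ)*y + μ) / (2*(μ*(1-μ)) * (y*(1-y) * Real.sqrt (y*(1-y))))
noncomputable def spsi (μ y : ℝ) : ℝ := μ^2*(1-y) / ((1-2*μ)*y + μ^2)
noncomputable def spsid (μ y : ℝ) : ℝ := -(μ^2*(1-μ)^2) / ((1-2*μ)*y + μ^2)^2
noncomputable def sh (μ y : ℝ) : ℝ := 2*(μ*(1-μ)) / ((1-2*μ)*y + μ)

section Geom
variable {μ y : ℝ} (hμ0 : 0 < μ) (hμ1 : μ < 1) (hy0 : 0 < y) (hy1 : y < 1)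
include hμ0 hμ1 hy0 hy1

lemma hq1 : 0 < (1-2*μ)*y + μ := by nlinarith
lemma hq2 : 0 < (1-2*μ)*y + μ^2 := by
  nlinarith [mul_pos hy0 (mul_pos (sub_pos.mpr hμ1) (sub_pos.mpr hμ1)),
    mul_pos (mul_pos hμ0 hμ0) (sub_pos.mpr hy1)]

lemma spsi_mem : spsi μ y ∈ Set.Ioo (0:ℝ) 1 := by
  have h2 := hq2 hμ0 hμ1 hy0 hy1
  unfold spsi
  constructor
  · apply div_pos (by nlinarith [mul_pos (mul_pos hμ0 hμ0) (sub_pos.mpr hy1)]) h2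
  · rw [div_lt_one h2]
    nlinarith [mul_pos hy0 (mul_pos (sub_pos.mpr hμ1) (sub_pos.mpr hμ1))]

lemma one_sub_spsi : 1 - spsi μ y = y*(1-μ)^2 / ((1-2*μ)*y + μ^2) := by
  have h2 := hq2 hμ0 hμ1 hy0 hy1
  have h2' : y * (1 - μ * 2) + μ ^ 2 ≠ 0 := by linarith
  unfold spsi
  field_simp
  ring

lemma q2_spsi : (1-2*μ) * spsi μ y + μ^2 = μ^2*(1-μ)^2 / ((1-2*μ)*y + μ^2) := by
  have h2 := hq2 hμ0 hμ1 hy0 hy1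
  unfold spsi
  field_simp
  ring

lemma q1_spsi : (1-2*μ) * spsi μ y + μ = μ*(1-μ)*((1-2*μ)*y + μ) / ((1-2*μ)*y + μ^2) := by
  have h2 := hq2 hμ0 hμ1 hy0 hy1
  unfold spsi
  field_simp
  ring

lemma spsi_mul_one_sub : spsi μ y * (1 - spsi μ y) =
    μ^2*(1-μ)^2 * (y*(1-y)) / ((1-2*μ)*y + μ^2)^2 := by
  have h2 := hq2 hμ0 hμ1 hy0 hy1
  rw [one_sub_spsi hμ0 hμ1 hy0 hy1]
  unfold spsi
  field_simp

lemma spsi_invol : spsi μ (spsi μ y) = y := by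
  have h2 := hq2 hμ0 hμ1 hy0 hy1
  have h2' : y * (1 - μ * 2) + μ ^ 2 ≠ 0 := by linarith
  have hμ1' : (0:ℝ) < 1 - μ := sub_pos.mpr hμ1
  have : spsi μ (spsi μ y) = μ^2*(1 - spsi μ y) / ((1-2*μ) * spsi μ y + μ^2) := rfl
  rw [this, one_sub_spsi hμ0 hμ1 hy0 hy1, q2_spsi hμ0 hμ1 hy0 hy1]
  have hne : μ^2*(1-μ)^2 ≠ 0 := by positivity
  field_simp
lemma sqrt_spsi : Real.sqrt (spsi μ y * (1 - spsi μ y)) =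
    μ*(1-μ) * Real.sqrt (y*(1-y)) / ((1-2*μ)*y + μ^2) := by
  have h2 := hq2 hμ0 hμ1 hy0 hy1
  have hc : (0:ℝ) < y*(1-y) := mul_pos hy0 (sub_pos.mpr hy1)
  have hkey : (μ*(1-μ) * Real.sqrt (y*(1-y)) / ((1-2*μ)*y + μ^2))^2 =
      μ^2*(1-μ)^2 * (y*(1-y)) / ((1-2*μ)*y + μ^2)^2 := by
    rw [div_pow, mul_pow, mul_pow, Real.sq_sqrt hc.le]
  rw [spsi_mul_one_sub hμ0 hμ1 hy0 hy1, ← hkey,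
    Real.sqrt_sq (div_nonneg (mul_nonneg (by nlinarith) (Real.sqrt_nonneg _)) h2.le)]

lemma spsi_sub_mu : spsi μ y - μ = μ*(1-μ)*(μ-y) / ((1-2*μ)*y + μ^2) := by
  have h2 := hq2 hμ0 hμ1 hy0 hy1
  have h2' : y * (1 - μ * 2) + μ ^ 2 ≠ 0 := by linarith
  unfold spsi
  field_simp
  ring

lemma sg_spsi : sg μ (spsi μ y) = - sg μ y := by
  have h2 := hq2 hμ0 hμ1 hy0 hy1
  have h2' : y * (1 - μ * 2) + μ ^ 2 ≠ 0 := by linarith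
  have hc : (0:ℝ) < y*(1-y) := mul_pos hy0 (sub_pos.mpr hy1)
  have hs : 0 < Real.sqrt (y*(1-y)) := Real.sqrt_pos.mpr hc
  have hμ1' : (0:ℝ) < 1 - μ := sub_pos.mpr hμ1
  have : sg μ (spsi μ y) =
      (spsi μ y - μ) / (μ*(1-μ) * Real.sqrt (spsi μ y * (1 - spsi μ y))) := rfl
  rw [this, sqrt_spsi hμ0 hμ1 hy0 hy1, spsi_sub_mu hμ0 hμ1 hy0 hy1]
  unfold sg
  have hs2 := Real.sq_sqrt hc.le
  generalize hgen : Real.sqrt (y*(1-y)) = s at hs2 hs ⊢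
  field_simp
  ring

lemma abs_spsid : |spsid μ y| = μ^2*(1-μ)^2 / ((1-2*μ)*y + μ^2)^2 := by
  have h2 := hq2 hμ0 hμ1 hy0 hy1
  unfold spsid
  rw [abs_div, abs_neg, abs_of_nonneg (by positivity : (0:ℝ) ≤ μ^2*(1-μ)^2),
    abs_of_nonneg (by positivity : (0:ℝ) ≤ ((1-2*μ)*y + μ^2)^2)]

lemma sgd_spsi : |spsid μ y| * sgd μ (spsi μ y) = sgd μ y := by
  have h2 := hq2 hμ0 hμ1 hy0 hy1
  have h2' : y * (1 - μ * 2) + μ ^ 2 ≠ 0 := by linarith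
  have h2'' : (1 - μ * 2) * y + μ ^ 2 ≠ 0 := by linarith
  have hc : (0:ℝ) < y*(1-y) := mul_pos hy0 (sub_pos.mpr hy1)
  have hs : 0 < Real.sqrt (y*(1-y)) := Real.sqrt_pos.mpr hc
  have hμ1' : (0:ℝ) < 1 - μ := sub_pos.mpr hμ1
  have hrfl : sgd μ (spsi μ y) = ((1-2*μ) * spsi μ y + μ) /
      (2*(μ*(1-μ)) * (spsi μ y * (1 - spsi μ y) * Real.sqrt (spsi μ y * (1 - spsi μ y)))) := rfl
  rw [abs_spsid hμ0 hμ1 hy0 hy1, hrfl, sqrt_spsi hμ0 hμ1 hy0 hy1,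
    spsi_mul_one_sub hμ0 hμ1 hy0 hy1, q1_spsi hμ0 hμ1 hy0 hy1]
  unfold sgd
  have hs2 := Real.sq_sqrt hc.le
  generalize hgen : Real.sqrt (y*(1-y)) = s at hs2 hs ⊢
  rw [← hs2]
  field_simp

lemma sh_spsi : sh μ y + sh μ (spsi μ y) = 2 := by
  have h2 := hq2 hμ0 hμ1 hy0 hy1
  have h1 := hq1 hμ0 hμ1 hy0 hy1
  have hμ1' : (0:ℝ) < 1 - μ := sub_pos.mpr hμ1
  have hrfl : sh μ (spsi μ y) = 2*(μ*(1-μ)) / ((1-2*μ) * spsi μ y + μ) := rfl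
  rw [hrfl, q1_spsi hμ0 hμ1 hy0 hy1]
  unfold sh
  field_simp
  ring

lemma hasDerivAt_spsi : HasDerivAt (spsi μ) (spsid μ y) y := by
  have h2 := hq2 hμ0 hμ1 hy0 hy1
  have h1 : HasDerivAt (fun y : ℝ => μ^2*(1-y)) (-μ^2) y := by
    simpa using (((hasDerivAt_const y (1:ℝ)).sub (hasDerivAt_id y)).const_mul (μ^2))
  have h2d : HasDerivAt (fun y : ℝ => (1-2*μ)*y + μ^2) (1-2*μ) y := by
    simpa using ((hasDerivAt_id y).const_mul (1-2*μ)).add_const (μ^2)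
  have := h1.fun_div h2d (ne_of_gt h2)
  refine this.congr_deriv (Eq.symm ?_)
  unfold spsid
  field_simp
  ring

lemma hasDerivAt_sg : HasDerivAt (sg μ) (sgd μ y) y := by
  have hc : (0:ℝ) < y*(1-y) := mul_pos hy0 (sub_pos.mpr hy1)
  have hs : 0 < Real.sqrt (y*(1-y)) := Real.sqrt_pos.mpr hc
  have hμ1' : (0:ℝ) < 1 - μ := sub_pos.mpr hμ1
  have hinner : HasDerivAt (fun y : ℝ => y*(1-y)) (1-2*y) y := by
    have := (hasDerivAt_id y).fun_mul ((hasDerivAt_const y (1:ℝ)).sub (hasDerivAt_id y))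
    refine this.congr_deriv (Eq.symm ?_)
    simp [id]
    ring
  have hsqrt : HasDerivAt (fun y : ℝ => Real.sqrt (y*(1-y)))
      ((1-2*y) / (2 * Real.sqrt (y*(1-y)))) y := hinner.sqrt (ne_of_gt hc)
  have hden : HasDerivAt (fun y : ℝ => μ*(1-μ) * Real.sqrt (y*(1-y)))
      (μ*(1-μ) * ((1-2*y) / (2 * Real.sqrt (y*(1-y))))) y := hsqrt.const_mul _
  have hnum : HasDerivAt (fun y : ℝ => y - μ) 1 y := (hasDerivAt_id y).sub_const μ
  have hdne : μ*(1-μ) * Real.sqrt (y*(1-y)) ≠ 0 := by positivity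
  have := hnum.fun_div hden hdne
  refine this.congr_deriv (Eq.symm ?_)
  unfold sgd
  have hs2 : Real.sqrt (y*(1-y)) ^ 2 = y*(1-y) := Real.sq_sqrt hc.le
  generalize hgen : Real.sqrt (y*(1-y)) = s at hs2 hs ⊢
  rw [← hs2]
  field_simp
  linear_combination (-2) * hs2

end Geom

section Glob
variable {μ : ℝ} (hμ0 : 0 < μ) (hμ1 : μ < 1)
include hμ0 hμ1

lemma spsi_injOn : Set.InjOn (spsi μ) (Set.Ioo 0 1) := by
  intro a ha b hb hab
  have h1 := spsi_invol hμ0 hμ1 ha.1 ha.2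
  have h2 := spsi_invol hμ0 hμ1 hb.1 hb.2
  rw [← h1, ← h2, hab]

lemma spsi_image : spsi μ '' Set.Ioo 0 1 = Set.Ioo 0 1 := by
  ext x
  constructor
  · rintro ⟨y, hy, rfl⟩
    exact spsi_mem hμ0 hμ1 hy.1 hy.2
  · intro hx
    exact ⟨spsi μ x, spsi_mem hμ0 hμ1 hx.1 hx.2, spsi_invol hμ0 hμ1 hx.1 hx.2⟩

lemma sgd_pos {y : ℝ} (hy0 : 0 < y) (hy1 : y < 1) : 0 < sgd μ y := by
  have h1 := hq1 hμ0 hμ1 hy0 hy1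
  have hc : (0:ℝ) < y*(1-y) := mul_pos hy0 (sub_pos.mpr hy1)
  have hs : 0 < Real.sqrt (y*(1-y)) := Real.sqrt_pos.mpr hc
  have hμ1' : (0:ℝ) < 1 - μ := sub_pos.mpr hμ1
  exact div_pos h1 (by positivity)

lemma sg_strictMono : StrictMonoOn (sg μ) (Set.Ioo 0 1) := by
  have hD : Convex ℝ (Set.Ioo (0:ℝ) 1) := convex_Ioo 0 1
  apply strictMonoOn_of_hasDerivWithinAt_pos hD (f' := sgd μ)
  · intro x hx
    exact (hasDerivAt_sg hμ0 hμ1 hx.1 hx.2).continuousAt.continuousWithinAt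
  · intro x hx
    rw [interior_Ioo] at hx
    exact (hasDerivAt_sg hμ0 hμ1 hx.1 hx.2).hasDerivWithinAt
  · intro x hx
    rw [interior_Ioo] at hx
    exact sgd_pos hμ0 hμ1 hx.1 hx.2

lemma sg_injOn : Set.InjOn (sg μ) (Set.Ioo 0 1) := (sg_strictMono hμ0 hμ1).injOn

lemma sg_large (t : ℝ) : ∃ b ∈ Set.Ioo (0:ℝ) 1, t < sg μ b := by
  have hμ1' : (0:ℝ) < 1 - μ := sub_pos.mpr hμ1
  set m := μ*(1-μ) with hm
  have hmpos : 0 < m := mul_pos hμ0 hμ1'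
  set D : ℝ := (1-μ)/(2*m*(|t|+1)) with hD
  have hDpos : 0 < D := by positivity
  set ε : ℝ := min ((1-μ)/2) (D^2) with he
  have hε0 : 0 < ε := lt_min (by positivity) (by positivity)
  have hε1 : ε < 1 := lt_of_le_of_lt (min_le_left _ _) (by linarith)
  refine ⟨1 - ε, ⟨by linarith, by linarith⟩, ?_⟩
  have hnum : (1-μ)/2 ≤ 1 - ε - μ := by
    have := min_le_left ((1-μ)/2) (D^2)
    rw [← he] at this
    linarith
  have hden : Real.sqrt ((1-ε)*(1-(1-ε))) ≤ D := by
    have h1 : (1-ε)*(1-(1-ε)) ≤ ε := by nlinarith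
    calc Real.sqrt ((1-ε)*(1-(1-ε))) ≤ Real.sqrt ε := Real.sqrt_le_sqrt h1
      _ ≤ Real.sqrt (D^2) := Real.sqrt_le_sqrt (min_le_right _ _)
      _ = D := Real.sqrt_sq hDpos.le
  have hsq_pos : 0 < Real.sqrt ((1-ε)*(1-(1-ε))) := by
    apply Real.sqrt_pos.mpr
    nlinarith
  have key : |t| + 1 ≤ sg μ (1-ε) := by
    unfold sg
    rw [← hm, le_div_iff₀ (by positivity)]
    calc (|t|+1) * (m * Real.sqrt ((1-ε)*(1-(1-ε)))) ≤ (|t|+1) * (m * D) := by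
          apply mul_le_mul_of_nonneg_left _ (by positivity)
          exact mul_le_mul_of_nonneg_left hden hmpos.le
      _ = (1-μ)/2 := by
          rw [hD]
          field_simp
      _ ≤ 1 - ε - μ := hnum
  calc t < |t| + 1 := by cases abs_cases t <;> linarith
    _ ≤ sg μ (1-ε) := key

lemma sg_small (t : ℝ) : ∃ a ∈ Set.Ioo (0:ℝ) 1, sg μ a < t := by
  obtain ⟨b, hb, hbt⟩ := sg_large (μ := 1-μ) (by linarith) (by linarith) (-t)
  refine ⟨1 - b, ⟨by linarith [hb.2], by linarith [hb.1]⟩, ?_⟩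
  have heq : sg μ (1-b) = - sg (1-μ) b := by
    unfold sg
    have : (1-b)*(1-(1-b)) = b*(1-b) := by ring
    rw [this]
    have : (1-μ)*(1-(1-μ)) = μ*(1-μ) := by ring
    rw [this]
    ring
  rw [heq]
  linarith

lemma sg_image : sg μ '' Set.Ioo 0 1 = Set.univ := by
  apply Set.eq_univ_of_forall
  intro t
  obtain ⟨a, ha, hat⟩ := sg_small hμ0 hμ1 t
  obtain ⟨b, hb, hbt⟩ := sg_large hμ0 hμ1 t
  have hab : a < b := by
    by_contra h
    push_neg at h
    rcases eq_or_lt_of_le h with rfl | h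
    · linarith
    · have := sg_strictMono hμ0 hμ1 hb ha h
      linarith
  have hcont : ContinuousOn (sg μ) (Set.Icc a b) := by
    intro x hx
    have hx0 : 0 < x := lt_of_lt_of_le ha.1 hx.1
    have hx1 : x < 1 := lt_of_le_of_lt hx.2 hb.2
    exact (hasDerivAt_sg hμ0 hμ1 hx0 hx1).continuousAt.continuousWithinAt
  have hsub := intermediate_value_Ioo hab.le hcont
  have ht : t ∈ Set.Ioo (sg μ a) (sg μ b) := ⟨hat, hbt⟩
  obtain ⟨y, hy, hyt⟩ := hsub ht
  exact ⟨y, ⟨lt_trans ha.1 hy.1, lt_trans hy.2 hb.2⟩, hyt⟩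

end Glob



section Pointwise
variable {μ σ2 y : ℝ} (hμ0 : 0 < μ) (hμ1 : μ < 1) (hσ2 : 0 < σ2)
  (hy0 : 0 < y) (hy1 : y < 1)
include hμ0 hμ1 hy0 hy1

lemma dev_eq : simplexDev y μ = (sg μ y)^2 := by
  have hc : (0:ℝ) < y*(1-y) := mul_pos hy0 (sub_pos.mpr hy1)
  unfold simplexDev sg
  rw [div_pow, mul_pow, mul_pow, Real.sq_sqrt hc.le]
  congr 1
  ring

lemma sgd_mul_sh : sgd μ y * sh μ y = (y*(1-y) * Real.sqrt (y*(1-y)))⁻¹ := by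
  have h1 : 0 < (1-2*μ)*y + μ := by nlinarith
  have hc : (0:ℝ) < y*(1-y) := mul_pos hy0 (sub_pos.mpr hy1)
  have hs : 0 < Real.sqrt (y*(1-y)) := Real.sqrt_pos.mpr hc
  have hμ1' : (0:ℝ) < 1 - μ := sub_pos.mpr hμ1
  unfold sgd sh
  have hs2 := Real.sq_sqrt hc.le
  generalize hgen : Real.sqrt (y*(1-y)) = s at hs2 hs ⊢
  field_simp

include hσ2 in
lemma pdf_eq : simplexPdf y μ σ2 =
    (2 * π * σ2) ^ (-(1/2) : ℝ) * (y*(1-y) * Real.sqrt (y*(1-y)))⁻¹ *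
      Real.exp (-(sg μ y)^2 / (2 * σ2)) := by
  have hc : (0:ℝ) < y*(1-y) := mul_pos hy0 (sub_pos.mpr hy1)
  have hs : 0 < Real.sqrt (y*(1-y)) := Real.sqrt_pos.mpr hc
  have h2πσ : (0:ℝ) < 2 * π * σ2 := by positivity
  unfold simplexPdf
  rw [← dev_eq hμ0 hμ1 hy0 hy1]
  congr 1
  rw [Real.mul_rpow h2πσ.le (by positivity)]
  congr 1
  rw [Real.rpow_neg (by positivity), ← Real.sqrt_eq_rpow]
  congr 1
  rw [show ((y*(1-y))^3 : ℝ) = (y*(1-y) * Real.sqrt (y*(1-y)))^2 by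
    rw [mul_pow (y*(1-y)) (Real.sqrt (y*(1-y))) 2, Real.sq_sqrt hc.le]; ring]
  exact Real.sqrt_sq (by positivity)

include hσ2 in
lemma integrand_eq :
    (simplexDev y μ / (2 * σ2^2) - 1 / (2 * σ2))^2 * simplexPdf y μ σ2 =
      sh μ y * (sgd μ y * sPsi σ2 (sg μ y)) := by
  rw [pdf_eq hμ0 hμ1 hσ2 hy0 hy1, dev_eq hμ0 hμ1 hy0 hy1,
    ← sgd_mul_sh hμ0 hμ1 hy0 hy1]
  unfold sPsi
  ring
end Pointwise

/-- The Fisher information for the dispersion parameter of the simplex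
distribution equals 1/(2(σ²)²). -/
theorem simplexPdf_fisher_info_dispersion (μ σ2 : ℝ)
    (hμ : μ ∈ Set.Ioo (0:ℝ) 1) (hσ2 : 0 < σ2) :
    ∫ y in (0:ℝ)..1,
        (simplexDev y μ / (2 * σ2^2) - 1 / (2 * σ2))^2 * simplexPdf y μ σ2 =
      1 / (2 * σ2^2) := by
  obtain ⟨hμ0, hμ1⟩ := hμ
  have hμ1' : (0:ℝ) < 1 - μ := sub_pos.mpr hμ1
  have hgderiv : ∀ x ∈ Set.Ioo (0:ℝ) 1,
      HasDerivWithinAt (sg μ) (sgd μ x) (Set.Ioo 0 1) x :=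
    fun x hx => (hasDerivAt_sg hμ0 hμ1 hx.1 hx.2).hasDerivWithinAt
  have hpsideriv : ∀ x ∈ Set.Ioo (0:ℝ) 1,
      HasDerivWithinAt (spsi μ) (spsid μ x) (Set.Ioo 0 1) x :=
    fun x hx => (hasDerivAt_spsi hμ0 hμ1 hx.1 hx.2).hasDerivWithinAt
  set F : ℝ → ℝ := fun x => sgd μ x * sPsi σ2 (sg μ x) with hF
  have hFeq : Set.EqOn (fun x => |sgd μ x| • sPsi σ2 (sg μ x)) F (Set.Ioo 0 1) := by
    intro x hx
    simp only [smul_eq_mul, hF]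
    rw [abs_of_pos (sgd_pos hμ0 hμ1 hx.1 hx.2)]
  have hcv1 : ∫ t : ℝ, sPsi σ2 t = ∫ x in Set.Ioo (0:ℝ) 1, F x := by
    have h := integral_image_eq_integral_abs_deriv_smul measurableSet_Ioo hgderiv
      (sg_injOn hμ0 hμ1) (sPsi σ2)
    rw [sg_image hμ0 hμ1, Measure.restrict_univ] at h
    rw [h]
    exact setIntegral_congr_fun measurableSet_Ioo hFeq
  have hFint : IntegrableOn F (Set.Ioo (0:ℝ) 1) := by
    have h := (integrableOn_image_iff_integrableOn_abs_deriv_smul measurableSet_Ioo hgderiv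
      (sg_injOn hμ0 hμ1) (sPsi σ2)).mp
      (by rw [sg_image hμ0 hμ1]; exact (integrable_sPsi hσ2).integrableOn)
    exact h.congr_fun hFeq measurableSet_Ioo
  have hsh_meas : Measurable (sh μ) := by
    unfold sh
    exact measurable_const.div ((measurable_id.const_mul _).add_const _)
  have hδ : 0 < min μ (1-μ) := lt_min hμ0 hμ1'
  have hshF_int : IntegrableOn (fun x => sh μ x * F x) (Set.Ioo (0:ℝ) 1) := by
    apply Integrable.bdd_mul (c := 2*(μ*(1-μ))/(min μ (1-μ))) hFint
      (hsh_meas.aestronglyMeasurable)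
    filter_upwards [ae_restrict_mem measurableSet_Ioo] with x hx
    have hq1x : min μ (1-μ) ≤ (1-2*μ)*x + μ := by
      rcases le_total (1-2*μ) 0 with h | h
      · have : (1-2*μ)*x ≥ (1-2*μ)*1 := by nlinarith [hx.2]
        calc min μ (1-μ) ≤ 1-μ := min_le_right _ _
          _ = (1-2*μ)*1 + μ := by ring
          _ ≤ (1-2*μ)*x + μ := by linarith
      · have : (1-2*μ)*x ≥ 0 := mul_nonneg h hx.1.le
        calc min μ (1-μ) ≤ μ := min_le_left _ _
          _ ≤ (1-2*μ)*x + μ := by linarith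
    have hq1pos : 0 < (1-2*μ)*x + μ := lt_of_lt_of_le hδ hq1x
    have hshpos : 0 < sh μ x := div_pos (by positivity) hq1pos
    rw [Real.norm_eq_abs, abs_of_pos hshpos]
    unfold sh
    exact div_le_div_of_nonneg_left (by positivity) hδ hq1x
  have hcv2 : ∫ y in Set.Ioo (0:ℝ) 1, sh μ y * F y =
      ∫ x in Set.Ioo (0:ℝ) 1, |spsid μ x| • (sh μ (spsi μ x) * F (spsi μ x)) := by
    have h := integral_image_eq_integral_abs_deriv_smul measurableSet_Ioo hpsideriv
      (spsi_injOn hμ0 hμ1) (fun y => sh μ y * F y)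
    rwa [spsi_image hμ0 hμ1] at h
  have hptwise : Set.EqOn (fun x => |spsid μ x| • (sh μ (spsi μ x) * F (spsi μ x)))
      (fun x => 2 * F x - sh μ x * F x) (Set.Ioo 0 1) := by
    intro x hx
    have h1 := sgd_spsi hμ0 hμ1 hx.1 hx.2
    have h2 := sg_spsi hμ0 hμ1 hx.1 hx.2
    have h3 := sh_spsi hμ0 hμ1 hx.1 hx.2
    have heven : sPsi σ2 (sg μ (spsi μ x)) = sPsi σ2 (sg μ x) := by
      rw [h2]
      unfold sPsi
      simp only [neg_sq]
    simp only [smul_eq_mul, hF]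
    calc |spsid μ x| * (sh μ (spsi μ x) * (sgd μ (spsi μ x) * sPsi σ2 (sg μ (spsi μ x))))
        = sh μ (spsi μ x) * ((|spsid μ x| * sgd μ (spsi μ x)) * sPsi σ2 (sg μ x)) := by
          rw [heven]; ring
      _ = sh μ (spsi μ x) * (sgd μ x * sPsi σ2 (sg μ x)) := by rw [h1]
      _ = (2 - sh μ x) * (sgd μ x * sPsi σ2 (sg μ x)) := by
          rw [show sh μ (spsi μ x) = 2 - sh μ x by linarith]
      _ = 2 * (sgd μ x * sPsi σ2 (sg μ x)) - sh μ x * (sgd μ x * sPsi σ2 (sg μ x)) := by ring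
  have hkey : ∫ y in Set.Ioo (0:ℝ) 1, sh μ y * F y = ∫ x in Set.Ioo (0:ℝ) 1, F x := by
    have h4 : ∫ y in Set.Ioo (0:ℝ) 1, sh μ y * F y =
        ∫ x in Set.Ioo (0:ℝ) 1, (2 * F x - sh μ x * F x) := by
      rw [hcv2]
      exact setIntegral_congr_fun measurableSet_Ioo hptwise
    rw [integral_sub (hFint.const_mul 2) hshF_int, MeasureTheory.integral_const_mul] at h4
    linarith
  rw [intervalIntegral.integral_of_le zero_le_one, MeasureTheory.integral_Ioc_eq_integral_Ioo]
  rw [setIntegral_congr_fun measurableSet_Ioo (fun y hy =>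
    integrand_eq hμ0 hμ1 hσ2 hy.1 hy.2)]
  rw [hkey, ← hcv1, integral_sPsi hσ2]
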